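/- Let y₁, ..., y_k ∈ ℝ^m be unit vectors with associated Householder reflectors H_i = I − 2 y_i y_iᵀ. Let Y_k = [y₁ ... y_k] and let T_k be the upper triangular k×k matrix with (T_k)_{ii} = 1, (T_k)_{ij} = 2 y_iᵀ y_j for i < j, and 0 otherwise. If T_k is invertible, then H₁ H₂ ⋯ H_k = I − 2 Y_k T_k^{-1} Y_kᵀ. -/

import Mathlib

open Matrix BigOperators

namespace WYaux

variable {m : ℕ}

def Yof {k : ℕ} (y : Fin k → Fin m → ℝ) : Matrix (Fin m) (Fin k) ℝ :=
  Matrix.of fun a i => y i a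

def Tof {k : ℕ} (y : Fin k → Fin m → ℝ) : Matrix (Fin k) (Fin k) ℝ :=
  Matrix.of fun i j =>
    if i = j then 1 else if i < j then 2 * ∑ a, y i a * y j a else 0

def Hof {k : ℕ} (y : Fin k → Fin m → ℝ) (i : Fin k) : Matrix (Fin m) (Fin m) ℝ :=
  1 - (2 : ℝ) • Matrix.vecMulVec (y i) (y i)

theorem alg (M N : Matrix (Fin m) (Fin m) ℝ) :
    (1 - (2:ℝ) • M) * (1 - (2:ℝ) • N)
      = 1 - (2:ℝ) • (M * (1 - (2:ℝ) • N) + N) := by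
  simp only [mul_sub, sub_mul, mul_one, one_mul, smul_add, smul_sub,
    Matrix.mul_smul, Matrix.smul_mul, smul_smul]
  module

theorem aux (k : ℕ) (y : Fin k → Fin m → ℝ) :
    ∃ B : Matrix (Fin k) (Fin m) ℝ,
      Tof y * B = (Yof y)ᵀ ∧
      (List.ofFn (Hof y)).prod = 1 - (2 : ℝ) • (Yof y * B) := by
  induction k with
  | zero =>
      refine ⟨0, ?_, ?_⟩
      · ext i a; exact i.elim0
      · simp
  | succ k ih =>
      obtain ⟨B', hTB, hP⟩ := ih (fun i => y i.castSucc)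
      set y' : Fin k → Fin m → ℝ := fun i => y i.castSucc with hy'
      set v : Fin m → ℝ := y (Fin.last k) with hv
      set C : Matrix (Fin k) (Fin m) ℝ :=
        B' * (1 - (2 : ℝ) • Matrix.vecMulVec v v) with hC
      set B : Matrix (Fin (k+1)) (Fin m) ℝ :=
        Matrix.of (fun i a => if h : (i : ℕ) < k then C ⟨i, h⟩ a else v a) with hB
      have hBcast : ∀ (j : Fin k) (b : Fin m), B j.castSucc b = C j b := by
        intro j b
        simp [hB, j.isLt]
      have hBlast : ∀ b : Fin m, B (Fin.last k) b = v b := by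
        intro b
        simp [hB]
      have hTcast : ∀ i j : Fin k,
          Tof y i.castSucc j.castSucc = Tof y' i j := by
        intro i j
        simp [Tof, Fin.castSucc_inj, Fin.castSucc_lt_castSucc_iff, hy']
      have hTlastlast : Tof y (Fin.last k) (Fin.last k) = 1 := by simp [Tof]
      have hTlastcast : ∀ j : Fin k, Tof y (Fin.last k) j.castSucc = 0 := by
        intro j
        have h1 : Fin.last k ≠ j.castSucc := (Fin.castSucc_lt_last j).ne'
        have h2 : ¬ Fin.last k < j.castSucc := not_lt_of_gt (Fin.castSucc_lt_last j)
        simp [Tof, h1, h2]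
      have hTcastlast : ∀ i : Fin k,
          Tof y i.castSucc (Fin.last k) = 2 * ∑ a, y' i a * v a := by
        intro i
        have h1 : i.castSucc ≠ Fin.last k := (Fin.castSucc_lt_last i).ne
        have h2 : i.castSucc < Fin.last k := Fin.castSucc_lt_last i
        simp [Tof, h1, h2, hy', hv]
      refine ⟨B, ?_, ?_⟩
      · ext i b
        refine Fin.lastCases ?_ ?_ i
        · -- last row
          rw [Matrix.mul_apply, Fin.sum_univ_castSucc]
          simp only [hTlastlast, one_mul, hBlast]
          rw [Finset.sum_eq_zero (fun j _ => by rw [hTlastcast j, zero_mul])]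
          simp [Yof, hv]
        · intro i
          rw [Matrix.mul_apply, Fin.sum_univ_castSucc]
          have hsum : ∑ j : Fin k, Tof y i.castSucc j.castSucc * B j.castSucc b
              = (Tof y' * C) i b := by
            rw [Matrix.mul_apply]
            exact Finset.sum_congr rfl fun j _ => by rw [hTcast, hBcast]
          rw [hsum, hBlast, hTcastlast, hC, ← Matrix.mul_assoc, hTB]
          have hYC : (((Yof y')ᵀ * (1 - (2 : ℝ) • Matrix.vecMulVec v v) :
                Matrix (Fin k) (Fin m) ℝ)) i b
              = y' i b - 2 * (∑ a, y' i a * v a) * v b := by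
            rw [Matrix.mul_apply]
            simp only [Matrix.sub_apply, Matrix.smul_apply, Matrix.one_apply,
              Matrix.vecMulVec_apply, Matrix.transpose_apply, Yof, Matrix.of_apply,
              smul_eq_mul, mul_sub, mul_ite, mul_one, mul_zero]
            rw [Finset.sum_sub_distrib]
            rw [Finset.sum_ite_eq' Finset.univ b (fun a => y' i a)]
            simp [Finset.mul_sum, Finset.sum_mul]
            ring_nf
            exact Finset.sum_congr rfl fun a _ => by ring
          rw [hYC]
          simp [Yof, Matrix.transpose_apply, hy']
      · rw [List.ofFn_succ', List.prod_concat]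
        have hof : (List.ofFn fun i : Fin k => Hof y i.castSucc)
            = List.ofFn (Hof y') := rfl
        rw [hof, hP]
        have hYB : Yof y * B = Yof y' * C + Matrix.vecMulVec v v := by
          ext a b
          rw [Matrix.mul_apply, Fin.sum_univ_castSucc]
          simp only [Matrix.add_apply, Matrix.mul_apply, Matrix.vecMulVec_apply]
          congr 1
          · exact Finset.sum_congr rfl fun j _ => by
              rw [hBcast]; simp [Yof, hy']
          · rw [hBlast]; simp [Yof, hv]
        rw [hYB, hC, ← Matrix.mul_assoc, Hof]
        exact alg (Yof y' * B') (Matrix.vecMulVec v v)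

end WYaux

/-- Compact WY representation (Walker/Puglisi): the ordered product of
Householder reflectors `H₁ ⋯ H_k` built from unit vectors `y₁,…,y_k` equals
`I − 2 Y T⁻¹ Yᵀ` where `T` is the upper triangular matrix with unit diagonal
and strictly-upper entries `2 yᵢᵀ yⱼ`. -/
theorem compact_WY_representation (m k : ℕ)
    (y : Fin k → Fin m → ℝ)
    (hunit : ∀ i, ∑ a, (y i a) ^ 2 = 1)
    (H : Fin k → Matrix (Fin m) (Fin m) ℝ)
    (hH : ∀ i, H i = 1 - (2 : ℝ) • Matrix.vecMulVec (y i) (y i))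
    (Y : Matrix (Fin m) (Fin k) ℝ)
    (hY : ∀ a i, Y a i = y i a)
    (T : Matrix (Fin k) (Fin k) ℝ)
    (hT : ∀ i j : Fin k,
      T i j = if i = j then 1
        else if i < j then 2 * ∑ a, y i a * y j a else 0)
    (hTinv : IsUnit T.det) :
    (List.ofFn H).prod = 1 - (2 : ℝ) • (Y * T⁻¹ * Yᵀ) := by
  obtain ⟨B, hTB, hP⟩ := WYaux.aux k y
  have hYe : Y = WYaux.Yof y := by ext a i; rw [hY]; rfl
  have hTe : T = WYaux.Tof y := by ext i j; rw [hT]; rfl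
  have hHe : H = WYaux.Hof y := funext fun i => by rw [hH]; rfl
  have hBeq : B = T⁻¹ * Yᵀ := by
    have h1 : T * B = Yᵀ := by rw [hTe, hYe]; exact hTB
    rw [← h1, ← Matrix.mul_assoc, Matrix.nonsing_inv_mul T hTinv,
      Matrix.one_mul]
  rw [hHe, hP, ← hYe, hBeq, Matrix.mul_assoc]
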